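/- Fix an integer n ≥ 0 and real parameters p, q with p ≠ q, and let y be an arbitrary real number. Then the family (m ↦ R(n+1+m, n; p, q)·y^{n+m}/(n+m)!), indexed by m ∈ ℕ, has sum (HasSum) equal to (exp(y)/n!)·((exp(p·y) − exp(q·y))/(p−q))^{n}. -/

import Mathlib

open Finset

/-- The stationary weight of a word `a` with entries in `{0,1}` (encoded as `Fin 2`):
the product over positions `i` with `a i = 0` of `1 + p·m_i(a) + q·n_i(a)`,
where `m_i(a)` (resp. `n_i(a)`) is the number of `1`'s strictly before (resp. after) `i`. -/
noncomputable def wt (p q : ℝ) {m : ℕ} (a : Fin m → Fin 2) : ℝ :=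
  ∏ i ∈ univ.filter (fun i => a i = 0),
    (1 + p * ((univ.filter (fun j => j < i ∧ a j = 1)).card : ℝ)
       + q * ((univ.filter (fun j => i < j ∧ a j = 1)).card : ℝ))

/-- The number of `1`'s in the word `a`. -/
def ones {m : ℕ} (a : Fin m → Fin 2) : ℕ := (univ.filter (fun i => a i = 1)).card

/-- The restricted partition function `R(L, n; p, q)`: the sum of the weights `wt p q a`
over all words `a` of length `L - 1` with entries in `{0,1}` having exactly `n` ones. -/
noncomputable def R (L n : ℕ) (p q : ℝ) : ℝ :=
  ∑ a ∈ univ.filter (fun a : Fin (L - 1) → Fin 2 => ones a = n), wt p q a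

noncomputable def wta (a p q : ℝ) {m : ℕ} (w : Fin m → Fin 2) : ℝ :=
  ∏ i ∈ univ.filter (fun i => w i = 0),
    (a + p * ((univ.filter (fun j => j < i ∧ w j = 1)).card : ℝ)
       + q * ((univ.filter (fun j => i < j ∧ w j = 1)).card : ℝ))

noncomputable def Gg (a p q : ℝ) (k n : ℕ) : ℝ :=
  ∑ w ∈ univ.filter (fun w : Fin k → Fin 2 => ones w = n), wta a p q w

lemma ones_cons {k : ℕ} (t : Fin 2) (b : Fin k → Fin 2) :
    ones (Fin.cons t b : Fin (k+1) → Fin 2) = (if t = 1 then 1 else 0) + ones b := by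
  unfold ones
  rw [Finset.card_filter, Finset.card_filter, Fin.sum_univ_succ]
  simp [Fin.cons_zero, Fin.cons_succ]

lemma cnt_lt_succ {k : ℕ} (t : Fin 2) (b : Fin k → Fin 2) (i : Fin k) :
    ((univ.filter (fun j : Fin (k+1) => j < i.succ ∧ (Fin.cons t b : Fin (k+1) → Fin 2) j = 1)).card : ℝ)
      = (if t = 1 then 1 else 0)
        + ((univ.filter (fun j : Fin k => j < i ∧ b j = 1)).card : ℝ) := by
  rw [Finset.natCast_card_filter, Finset.natCast_card_filter, Fin.sum_univ_succ]
  simp [Fin.cons_zero, Fin.cons_succ, Fin.succ_pos, Fin.succ_lt_succ_iff]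

lemma cnt_gt_succ {k : ℕ} (t : Fin 2) (b : Fin k → Fin 2) (i : Fin k) :
    ((univ.filter (fun j : Fin (k+1) => i.succ < j ∧ (Fin.cons t b : Fin (k+1) → Fin 2) j = 1)).card : ℝ)
      = ((univ.filter (fun j : Fin k => i < j ∧ b j = 1)).card : ℝ) := by
  rw [Finset.natCast_card_filter, Finset.natCast_card_filter, Fin.sum_univ_succ]
  simp [Fin.cons_zero, Fin.cons_succ, Fin.succ_lt_succ_iff, Fin.not_lt_zero]

lemma cnt_lt_zero {k : ℕ} (t : Fin 2) (b : Fin k → Fin 2) :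
    ((univ.filter (fun j : Fin (k+1) => j < (0 : Fin (k+1)) ∧ (Fin.cons t b : Fin (k+1) → Fin 2) j = 1)).card : ℝ)
      = 0 := by
  simp [Fin.not_lt_zero]

lemma cnt_gt_zero {k : ℕ} (t : Fin 2) (b : Fin k → Fin 2) :
    ((univ.filter (fun j : Fin (k+1) => (0 : Fin (k+1)) < j ∧ (Fin.cons t b : Fin (k+1) → Fin 2) j = 1)).card : ℝ)
      = (ones b : ℝ) := by
  unfold ones
  rw [Finset.natCast_card_filter, Finset.natCast_card_filter, Fin.sum_univ_succ]
  simp [Fin.cons_zero, Fin.cons_succ, Fin.succ_pos]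

lemma wta_cons_zero {k : ℕ} (a p q : ℝ) (b : Fin k → Fin 2) :
    wta a p q (Fin.cons 0 b : Fin (k+1) → Fin 2) = (a + q * (ones b : ℝ)) * wta a p q b := by
  unfold wta
  rw [Finset.prod_filter, Finset.prod_filter, Fin.prod_univ_succ]
  simp only [Fin.cons_zero, Fin.cons_succ, cnt_lt_succ, cnt_gt_succ, cnt_lt_zero, cnt_gt_zero]
  norm_num

lemma wta_cons_one {k : ℕ} (a p q : ℝ) (b : Fin k → Fin 2) :
    wta a p q (Fin.cons 1 b : Fin (k+1) → Fin 2) = wta (a+p) p q b := by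
  unfold wta
  rw [Finset.prod_filter, Finset.prod_filter, Fin.prod_univ_succ]
  simp only [Fin.cons_zero, Fin.cons_succ, cnt_lt_succ, cnt_gt_succ, cnt_lt_zero, cnt_gt_zero]
  norm_num
  apply Finset.prod_congr rfl
  intro i _
  split_ifs with h
  · ring
  · rfl

lemma sum_cons_split {k : ℕ} (F : (Fin (k+1) → Fin 2) → ℝ) :
    ∑ w : Fin (k+1) → Fin 2, F w
      = (∑ b : Fin k → Fin 2, F (Fin.cons 0 b)) + (∑ b : Fin k → Fin 2, F (Fin.cons 1 b)) := by
  rw [← (Equiv.sum_comp (Fin.consEquiv (fun _ : Fin (k+1) => Fin 2)) F)]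
  rw [Fintype.sum_prod_type, Fin.sum_univ_two]
  rfl

lemma Gg_succ_succ (a p q : ℝ) (k n : ℕ) :
    Gg a p q (k+1) (n+1) = (a + q*((n:ℝ)+1)) * Gg a p q k (n+1) + Gg (a+p) p q k n := by
  unfold Gg
  rw [Finset.sum_filter, sum_cons_split, Finset.sum_filter, Finset.sum_filter, Finset.mul_sum]
  congr 1
  · apply Finset.sum_congr rfl; intro b _
    have hone : ones (Fin.cons 0 b : Fin (k+1) → Fin 2) = ones b := by
      rw [ones_cons]; norm_num
    rw [hone]
    split_ifs with h
    · rw [wta_cons_zero, h]; push_cast; ring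
    · rw [mul_zero]
  · apply Finset.sum_congr rfl; intro b _
    have hone : ones (Fin.cons 1 b : Fin (k+1) → Fin 2) = 1 + ones b := by
      rw [ones_cons]; norm_num
    rw [hone]
    have hiff : (1 + ones b = n + 1) ↔ (ones b = n) := by omega
    simp only [hiff]
    split_ifs with h
    · rw [wta_cons_one]
    · rfl

lemma Gg_succ_zero (a p q : ℝ) (k : ℕ) :
    Gg a p q (k+1) 0 = a * Gg a p q k 0 := by
  unfold Gg
  rw [Finset.sum_filter, sum_cons_split, Finset.sum_filter, Finset.mul_sum]
  have h2 : (∑ b : Fin k → Fin 2,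
      if ones (Fin.cons 1 b : Fin (k+1) → Fin 2) = 0 then wta a p q (Fin.cons 1 b) else 0) = 0 := by
    apply Finset.sum_eq_zero
    intro b _
    have hone : ones (Fin.cons 1 b : Fin (k+1) → Fin 2) = 1 + ones b := by
      rw [ones_cons]; norm_num
    rw [hone]
    simp
  rw [h2, add_zero]
  apply Finset.sum_congr rfl; intro b _
  have hone : ones (Fin.cons 0 b : Fin (k+1) → Fin 2) = ones b := by
    rw [ones_cons]; norm_num
  rw [hone]
  split_ifs with h
  · rw [wta_cons_zero, h]; push_cast; ring
  · rw [mul_zero]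

lemma Gg_nil (a p q : ℝ) : Gg a p q 0 0 = 1 := by
  unfold Gg
  rw [Finset.sum_filter]
  rw [Fintype.sum_unique]
  simp [ones, wta]

lemma Gg_big (a p q : ℝ) (k n : ℕ) (h : k < n) : Gg a p q k n = 0 := by
  unfold Gg
  convert Finset.sum_empty
  rw [Finset.filter_eq_empty_iff]
  intro w _
  have h1 : ones w ≤ k := by
    have := Finset.card_filter_le (univ : Finset (Fin k)) (fun i => w i = 1)
    simpa [ones] using this
  omega

noncomputable def E (a d : ℝ) : ℕ → ℕ → ℝ
  | 0, m => a ^ m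
  | n+1, m => ∑ j ∈ Finset.range (m+1), (a + ((n : ℝ) + 1) * d) ^ j * E a d n (m - j)

lemma E_zero (a d : ℝ) : ∀ n, E a d n 0 = 1
  | 0 => pow_zero a
  | n+1 => by simp [E, E_zero a d n]

lemma E_split_last (a d : ℝ) (n m : ℕ) :
    E a d (n+1) (m+1) = E a d n (m+1) + (a + ((n : ℝ) + 1) * d) * E a d (n+1) m := by
  show (∑ j ∈ Finset.range (m+2), (a + ((n : ℝ) + 1) * d) ^ j * E a d n (m+1-j)) = _
  rw [Finset.sum_range_succ']
  simp only [pow_zero, one_mul, Nat.sub_zero, pow_succ, Nat.succ_sub_succ]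
  rw [E, Finset.mul_sum]
  rw [add_comm]
  congr 1
  apply Finset.sum_congr rfl
  intro j hj
  ring

lemma E_split_first (a d : ℝ) (n : ℕ) : ∀ m : ℕ,
    E a d (n+1) (m+1) = E (a+d) d n (m+1) + a * E a d (n+1) m := by
  induction n with
  | zero =>
    intro m
    show (∑ j ∈ Finset.range (m+2), (a + (((0:ℕ):ℝ)+1) * d) ^ j * E a d 0 (m+1-j)) = _
    have hb : (a + (((0:ℕ):ℝ)+1) * d) = a + d := by push_cast; ring
    rw [hb, Finset.sum_range_succ]
    simp only [E, Nat.cast_zero, zero_add, one_mul, Nat.sub_self, pow_zero, mul_one]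
    have h1 : ∀ j ∈ Finset.range (m+1), (a + d) ^ j * a ^ (m+1-j)
        = a * ((a + d) ^ j * a ^ (m - j)) := by
      intro j hj
      rw [Finset.mem_range, Nat.lt_succ_iff] at hj
      rw [show m + 1 - j = (m - j) + 1 from by omega, pow_succ]
      ring
    rw [Finset.sum_congr rfl h1, ← Finset.mul_sum]
    ring
  | succ n ih =>
    intro m
    rw [E]
    have hc1 : ((n+1 : ℕ) : ℝ) + 1 = ((n:ℝ)+1+1) := by push_cast; ring
    have hc : (a + d) + ((n:ℝ)+1) * d = a + ((n:ℝ)+1+1) * d := by ring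
    rw [hc1]
    have hrhs : E (a+d) d (n+1) (m+1)
        = ∑ j ∈ Finset.range (m+2), (a + ((n : ℝ)+1+1) * d) ^ j * E (a+d) d n (m+1-j) := by
      rw [E, hc]
    rw [hrhs]
    have hE : E a d (n+2) m = ∑ j ∈ Finset.range (m+1), (a + ((n : ℝ)+1+1) * d) ^ j * E a d (n+1) (m-j) := by
      rw [E, hc1]
    rw [hE]
    rw [Finset.sum_range_succ]
    conv_rhs => rw [Finset.sum_range_succ]
    simp only [Nat.sub_self, E_zero, mul_one]
    have h2 : ∀ j ∈ Finset.range (m+1),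
        (a + ((n : ℝ)+1+1) * d) ^ j * E a d (n+1) (m+1-j)
        = (a + ((n : ℝ)+1+1) * d) ^ j * E (a+d) d n (m+1-j)
          + a * ((a + ((n : ℝ)+1+1) * d) ^ j * E a d (n+1) (m-j)) := by
      intro j hj
      rw [Finset.mem_range, Nat.lt_succ_iff] at hj
      rw [show m + 1 - j = (m - j) + 1 from by omega, ih (m - j)]
      ring
    rw [Finset.sum_congr rfl h2, Finset.sum_add_distrib, ← Finset.mul_sum]
    ring

lemma E_diff (a d : ℝ) (n m : ℕ) :
    E (a+d) d n (m+1) - E a d n (m+1) = ((n : ℝ) + 1) * d * E a d (n+1) m := by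
  linear_combination (E_split_last a d n m) - (E_split_first a d n m)

lemma Gg_eq_E (p q : ℝ) : ∀ (k : ℕ) (a : ℝ) (n m : ℕ), n + m = k →
    Gg a p q k n = E (a + q * (n : ℝ)) (p - q) n m := by
  intro k
  induction k with
  | zero =>
    intro a n m h
    obtain ⟨rfl, rfl⟩ : n = 0 ∧ m = 0 := by omega
    rw [Gg_nil]
    simp [E]
  | succ k ih =>
    intro a n m h
    cases n with
    | zero =>
      have hm : m = k + 1 := by omega
      subst hm
      rw [Gg_succ_zero, ih a 0 k (by omega)]
      simp only [Nat.cast_zero, mul_zero, add_zero]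
      show a * E a (p-q) 0 k = E a (p-q) 0 (k+1)
      simp only [E]
      ring
    | succ n' =>
      cases m with
      | zero =>
        have hk : n' = k := by omega
        subst hk
        rw [Gg_succ_succ, Gg_big a p q n' (n'+1) (by omega), mul_zero, zero_add]
        rw [ih (a+p) n' 0 (by omega)]
        rw [E_zero, E_zero]
      | succ m' =>
        rw [Gg_succ_succ]
        rw [ih a (n'+1) m' (by omega), ih (a+p) n' (m'+1) (by omega)]
        have hA : (a+p) + q * (n' : ℝ) = (a + q * ((n'+1 : ℕ) : ℝ)) + (p - q) := by
          push_cast; ring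
        rw [hA]
        rw [E_split_first]
        have hA2 : a + q * ((n' : ℝ) + 1) = a + q * ((n'+1 : ℕ) : ℝ) := by push_cast; ring
        rw [hA2]
        ring

lemma hasSum_E (d : ℝ) (hd : d ≠ 0) (y : ℝ) : ∀ (n : ℕ) (a : ℝ),
    HasSum (fun m : ℕ => E a d n m * y ^ (n + m) / ((n + m).factorial : ℝ))
      (Real.exp (a * y) * (Real.exp (d * y) - 1) ^ n / ((n.factorial : ℝ) * d ^ n)) := by
  intro n
  induction n with
  | zero =>
    intro a
    have h := NormedSpace.expSeries_div_hasSum_exp (a * y)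
    rw [← Real.exp_eq_exp_ℝ] at h
    simpa [E, mul_pow, mul_div_assoc] using h
  | succ n ih =>
    intro a
    set c : ℝ := ((n : ℝ) + 1) * d with hcdef
    have hc : c ≠ 0 := by
      apply mul_ne_zero _ hd
      positivity
    have key : ∀ b : ℝ,
        HasSum (fun m : ℕ => E b d n (m + 1) * y ^ (n + (m + 1)) / ((n + (m + 1)).factorial : ℝ))
          (Real.exp (b * y) * (Real.exp (d * y) - 1) ^ n / ((n.factorial : ℝ) * d ^ n)
            - y ^ n / (n.factorial : ℝ)) := by
      intro b
      refine (hasSum_nat_add_iff (f := fun m : ℕ =>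
        E b d n m * y ^ (n + m) / ((n + m).factorial : ℝ)) 1).2 ?_
      have h0 : E b d n 0 * y ^ (n + 0) / ((n + 0).factorial : ℝ) = y ^ n / (n.factorial : ℝ) := by
        rw [E_zero]; simp
      simpa [Finset.sum_range_one, E_zero, sub_add_cancel] using ih b
    have h3 := ((key (a + d)).sub (key a)).div_const c
    have hfun : ∀ m : ℕ,
        (E (a+d) d n (m + 1) * y ^ (n + (m + 1)) / ((n + (m + 1)).factorial : ℝ)
          - E a d n (m + 1) * y ^ (n + (m + 1)) / ((n + (m + 1)).factorial : ℝ)) / c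
        = E a d (n+1) m * y ^ (n + 1 + m) / ((n + 1 + m).factorial : ℝ) := by
      intro m
      have hdiff := E_diff a d n m
      rw [show n + 1 + m = n + (m + 1) from by omega]
      rw [div_sub_div_same, div_div, ← sub_mul, hdiff, ← hcdef]
      have hF : ((n + (m+1)).factorial : ℝ) ≠ 0 := Nat.cast_ne_zero.mpr (Nat.factorial_ne_zero _)
      field_simp
    have hfe : (fun m : ℕ => E a d (n+1) m * y ^ (n+1+m) / (((n+1+m).factorial : ℝ)))
        = fun m : ℕ =>
          (E (a+d) d n (m + 1) * y ^ (n + (m + 1)) / ((n + (m + 1)).factorial : ℝ)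
            - E a d n (m + 1) * y ^ (n + (m + 1)) / ((n + (m + 1)).factorial : ℝ)) / c :=
      funext fun m => (hfun m).symm
    have hval : (Real.exp ((a+d) * y) * (Real.exp (d * y) - 1) ^ n / ((n.factorial : ℝ) * d ^ n)
          - y ^ n / (n.factorial : ℝ)
          - (Real.exp (a * y) * (Real.exp (d * y) - 1) ^ n / ((n.factorial : ℝ) * d ^ n)
            - y ^ n / (n.factorial : ℝ))) / c
        = Real.exp (a * y) * (Real.exp (d * y) - 1) ^ (n+1) / (((n+1).factorial : ℝ) * d ^ (n+1)) := by
      have hexp : Real.exp ((a+d) * y) = Real.exp (a * y) * Real.exp (d * y) := by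
        rw [← Real.exp_add]; ring_nf
      have hfac : (((n+1).factorial : ℝ)) = ((n : ℝ) + 1) * (n.factorial : ℝ) := by
        rw [Nat.factorial_succ]; push_cast; ring
      have hn0 : (n.factorial : ℝ) ≠ 0 := Nat.cast_ne_zero.mpr (Nat.factorial_ne_zero _)
      have hn1 : ((n : ℝ) + 1) ≠ 0 := by positivity
      rw [hexp, hfac, hcdef]
      field_simp
      ring
    rw [hfe, ← hval]
    exact h3

/-- the column exponential generating function of the restricted partition
function. -/
theorem R_column_egf (n : ℕ) (p q : ℝ) (hpq : p ≠ q) (y : ℝ) :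
    HasSum
      (fun m : ℕ => R (n + 1 + m) n p q * y ^ (n + m) / ((n + m).factorial : ℝ))
      (Real.exp y / (n.factorial : ℝ)
        * ((Real.exp (p * y) - Real.exp (q * y)) / (p - q)) ^ n) := by
  have hd : p - q ≠ 0 := sub_ne_zero.mpr hpq
  have key := hasSum_E (p - q) hd y n (1 + q * n)
  have hfun : ∀ m : ℕ, R (n + 1 + m) n p q * y ^ (n + m) / ((n + m).factorial : ℝ)
      = E (1 + q * n) (p - q) n m * y ^ (n + m) / ((n + m).factorial : ℝ) := by
    intro m
    have hR : R (n + 1 + m) n p q = Gg 1 p q (n + m) n := by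
      have h0 : R (n + 1 + m) n p q = Gg 1 p q (n + 1 + m - 1) n := rfl
      rw [h0, show n + 1 + m - 1 = n + m from by omega]
    rw [hR, Gg_eq_E p q (n + m) 1 n m rfl]
  have hexp1 : Real.exp (q * y) * Real.exp ((p - q) * y) = Real.exp (p * y) := by
    rw [← Real.exp_add, show q * y + (p - q) * y = p * y from by ring]
  have hval : Real.exp ((1 + q * n) * y) * (Real.exp ((p - q) * y) - 1) ^ n
        / ((n.factorial : ℝ) * (p - q) ^ n)
      = Real.exp y / (n.factorial : ℝ)
        * ((Real.exp (p * y) - Real.exp (q * y)) / (p - q)) ^ n := by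
    have h1 : (1 + q * (n : ℝ)) * y = y + n * (q * y) := by ring
    rw [h1, Real.exp_add, Real.exp_nat_mul]
    have h2 : Real.exp (q * y) ^ n * (Real.exp ((p - q) * y) - 1) ^ n
        = (Real.exp (p * y) - Real.exp (q * y)) ^ n := by
      rw [← mul_pow, mul_sub, mul_one, hexp1]
    rw [div_pow, mul_assoc, h2]
    have hn0 : (n.factorial : ℝ) ≠ 0 := Nat.cast_ne_zero.mpr (Nat.factorial_ne_zero _)
    have hdn : (p - q) ^ n ≠ 0 := pow_ne_zero _ hd
    field_simp
  rw [funext hfun, ← hval]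
  exact key
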